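/- Let A₁, A₂ ⊆ E be nonempty finite sets, let 0 < λ < 1, and let x* ∈ E be a local minimizer of Φ_λ. Then x* has a unique nearest point in A₁ and a unique nearest point in A₂, i.e., Π_{A₁}(x*) and Π_{A₂}(x*) are singletons. -/

import Mathlib

open MeasureTheory Metric Filter Topology

/-- The set `Π_A(x)` of nearest points of `x` in `A`. -/
def nearestPts {d : ℕ} (A : Set (EuclideanSpace ℝ (Fin d)))
    (x : EuclideanSpace ℝ (Fin d)) : Set (EuclideanSpace ℝ (Fin d)) :=
  {a ∈ A | ‖x - a‖ = Metric.infDist x A}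

/-- The geometric distance potential `Φ_λ(x) = λ d_{A₁}(x)² + (1-λ) d_{A₂}(x)²`. -/
noncomputable def distPotential {d : ℕ} (A₁ A₂ : Set (EuclideanSpace ℝ (Fin d))) (lam : ℝ)
    (x : EuclideanSpace ℝ (Fin d)) : ℝ :=
  lam * (Metric.infDist x A₁) ^ 2 + (1 - lam) * (Metric.infDist x A₂) ^ 2

lemma exp_norm {d : ℕ} (u v : EuclideanSpace ℝ (Fin d)) (t : ℝ) :
    ‖u + t • v‖ ^ 2 = ‖u‖ ^ 2 + 2 * t * (inner ℝ u v : ℝ) + t ^ 2 * ‖v‖ ^ 2 := by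
  rw [norm_add_sq_real, real_inner_smul_right, norm_smul]
  simp [mul_pow, sq_abs]
  ring

lemma sq_mono_of_nonneg {x y : ℝ} (h0 : 0 ≤ x) (h : x ≤ y) : x ^ 2 ≤ y ^ 2 := by
  nlinarith

set_option maxHeartbeats 1000000 in
lemma key {d : ℕ} {A₁ A₂ : Set (EuclideanSpace ℝ (Fin d))} {μ ν : ℝ}
    (hμ : 0 < μ) (hν : 0 ≤ ν) (hA₂ : A₂.Nonempty) (hA₂fin : A₂.Finite)
    {x : EuclideanSpace ℝ (Fin d)}
    (hmin : IsLocalMin (fun y => μ * (Metric.infDist y A₁) ^ 2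
      + ν * (Metric.infDist y A₂) ^ 2) x)
    {a b : EuclideanSpace ℝ (Fin d)} (ha : a ∈ nearestPts A₁ x)
    (hb : b ∈ nearestPts A₁ x) : a = b := by
  by_contra hab
  obtain ⟨haA, haD⟩ := ha
  obtain ⟨hbA, hbD⟩ := hb
  obtain ⟨b₂, hb₂A, hb₂D⟩ := hA₂fin.isCompact.exists_infDist_eq_dist hA₂ x
  set v : EuclideanSpace ℝ (Fin d) := b - a with hv
  have hvne : v ≠ 0 := sub_ne_zero.mpr (Ne.symm hab)
  have hvpos : (0:ℝ) < ‖v‖ := norm_pos_iff.mpr hvne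
  obtain ⟨ε, hε, hball⟩ := Metric.eventually_nhds_iff.mp hmin
  set t : ℝ := min (μ / (2 * (μ + ν))) (ε / (2 * ‖v‖)) with ht
  have htpos : 0 < t := lt_min (by positivity) (by positivity)
  have htμ : t * (μ + ν) < μ := by
    have h1 : t ≤ μ / (2 * (μ + ν)) := min_le_left _ _
    have hμν : 0 < μ + ν := by linarith
    calc t * (μ + ν) ≤ (μ / (2 * (μ + ν))) * (μ + ν) := by
          exact mul_le_mul_of_nonneg_right h1 hμν.le
      _ = μ / 2 := by field_simp
      _ < μ := by linarith
  have htball : ∀ s : ℝ, |s| = t → dist (x + s • v) x < ε := by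
    intro s hs
    have : dist (x + s • v) x = |s| * ‖v‖ := by
      rw [dist_eq_norm]
      simp [norm_smul]
    rw [this, hs]
    have h2 : t ≤ ε / (2 * ‖v‖) := min_le_right _ _
    calc t * ‖v‖ ≤ (ε / (2 * ‖v‖)) * ‖v‖ := mul_le_mul_of_nonneg_right h2 hvpos.le
      _ = ε / 2 := by field_simp
      _ < ε := by linarith
  -- the two local-min inequalities
  have hD₁ : 0 ≤ Metric.infDist x A₁ := Metric.infDist_nonneg
  have hD₂ : 0 ≤ Metric.infDist x A₂ := Metric.infDist_nonneg
  have hfx : μ * (Metric.infDist x A₁) ^ 2 + ν * (Metric.infDist x A₂) ^ 2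
      = μ * ‖x - b‖ ^ 2 + ν * ‖x - b₂‖ ^ 2 := by
    rw [hbD, hb₂D, dist_eq_norm]
  have hfx' : μ * (Metric.infDist x A₁) ^ 2 + ν * (Metric.infDist x A₂) ^ 2
      = μ * ‖x - a‖ ^ 2 + ν * ‖x - b₂‖ ^ 2 := by
    rw [haD, hb₂D, dist_eq_norm]
  have hupper : ∀ (y : EuclideanSpace ℝ (Fin d)) (c c₂ : EuclideanSpace ℝ (Fin d)),
      c ∈ A₁ → c₂ ∈ A₂ →
      μ * (Metric.infDist y A₁) ^ 2 + ν * (Metric.infDist y A₂) ^ 2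
        ≤ μ * ‖y - c‖ ^ 2 + ν * ‖y - c₂‖ ^ 2 := by
    intro y c c₂ hc hc₂
    have h1 : Metric.infDist y A₁ ≤ ‖y - c‖ := by
      rw [← dist_eq_norm]; exact Metric.infDist_le_dist_of_mem hc
    have h2 : Metric.infDist y A₂ ≤ ‖y - c₂‖ := by
      rw [← dist_eq_norm]; exact Metric.infDist_le_dist_of_mem hc₂
    have := sq_mono_of_nonneg Metric.infDist_nonneg h1
    have := sq_mono_of_nonneg Metric.infDist_nonneg h2
    nlinarith
  -- inequality 1 at x + t v with (b, b₂)
  have h1 := hball (htball t (abs_of_pos htpos))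
  have h2 := hball (htball (-t) (by rw [abs_neg, abs_of_pos htpos]))
  simp only at h1 h2
  have hub1 := hupper (x + t • v) b b₂ hbA hb₂A
  have hub2 := hupper (x + (-t) • v) a b₂ haA hb₂A
  have e1 : x + t • v - b = (x - b) + t • v := by abel
  have e2 : x + t • v - b₂ = (x - b₂) + t • v := by abel
  have e3 : x + (-t) • v - a = (x - a) + (-t) • v := by abel
  have e4 : x + (-t) • v - b₂ = (x - b₂) + (-t) • v := by abel
  rw [e1, e2, exp_norm, exp_norm] at hub1
  rw [e3, e4, exp_norm, exp_norm] at hub2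
  have key1 : μ * ‖x - b‖ ^ 2 + ν * ‖x - b₂‖ ^ 2
      ≤ μ * (‖x - b‖ ^ 2 + 2 * t * (inner ℝ (x - b) v : ℝ) + t ^ 2 * ‖v‖ ^ 2)
        + ν * (‖x - b₂‖ ^ 2 + 2 * t * (inner ℝ (x - b₂) v : ℝ) + t ^ 2 * ‖v‖ ^ 2) := by
    calc μ * ‖x - b‖ ^ 2 + ν * ‖x - b₂‖ ^ 2
        = μ * (Metric.infDist x A₁) ^ 2 + ν * (Metric.infDist x A₂) ^ 2 := hfx.symm
      _ ≤ _ := le_trans h1 hub1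
  have key2 : μ * ‖x - a‖ ^ 2 + ν * ‖x - b₂‖ ^ 2
      ≤ μ * (‖x - a‖ ^ 2 + 2 * (-t) * (inner ℝ (x - a) v : ℝ) + (-t) ^ 2 * ‖v‖ ^ 2)
        + ν * (‖x - b₂‖ ^ 2 + 2 * (-t) * (inner ℝ (x - b₂) v : ℝ) + (-t) ^ 2 * ‖v‖ ^ 2) := by
    calc μ * ‖x - a‖ ^ 2 + ν * ‖x - b₂‖ ^ 2
        = μ * (Metric.infDist x A₁) ^ 2 + ν * (Metric.infDist x A₂) ^ 2 := hfx'.symm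
      _ ≤ _ := le_trans h2 hub2
  have hinner : (inner ℝ (x - b) v : ℝ) - (inner ℝ (x - a) v : ℝ) = -‖v‖ ^ 2 := by
    rw [← inner_sub_left]
    have : x - b - (x - a) = -v := by rw [hv]; abel
    rw [this, inner_neg_left, real_inner_self_eq_norm_sq]
  have hib : (inner ℝ (x - b) v : ℝ) = (inner ℝ (x - a) v : ℝ) - ‖v‖ ^ 2 := by linarith
  rw [hib] at key1
  have hvv : (0:ℝ) < ‖v‖ ^ 2 := by positivity
  have hsum : 0 ≤ 2 * t * ‖v‖ ^ 2 * (t * (μ + ν) - μ) := by linarith [key1, key2]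
  have hposf : 0 < 2 * t * ‖v‖ ^ 2 * (μ - t * (μ + ν)) := by
    have h1 : (0:ℝ) < 2 * t * ‖v‖ ^ 2 := by positivity
    have h2 : 0 < μ - t * (μ + ν) := by linarith
    exact mul_pos h1 h2
  nlinarith [hsum, hposf]

theorem local_minimizers_have_unique_nearest_points
    (d : ℕ) (hd : 1 ≤ d)
    (A₁ A₂ : Set (EuclideanSpace ℝ (Fin d)))
    (hA₁ : A₁.Nonempty) (hA₂ : A₂.Nonempty)
    (hA₁fin : A₁.Finite) (hA₂fin : A₂.Finite)
    (lam : ℝ) (hlam₀ : 0 < lam) (hlam₁ : lam < 1)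
    (xstar : EuclideanSpace ℝ (Fin d))
    (hmin : IsLocalMin (distPotential A₁ A₂ lam) xstar) :
    (∃ a₁, nearestPts A₁ xstar = {a₁}) ∧ (∃ a₂, nearestPts A₂ xstar = {a₂}) := by
  have hmin₁ : IsLocalMin (fun y => lam * (Metric.infDist y A₁) ^ 2
      + (1 - lam) * (Metric.infDist y A₂) ^ 2) xstar := hmin
  have hmin₂ : IsLocalMin (fun y => (1 - lam) * (Metric.infDist y A₂) ^ 2
      + lam * (Metric.infDist y A₁) ^ 2) xstar := by
    have : (fun y => (1 - lam) * (Metric.infDist y A₂) ^ 2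
        + lam * (Metric.infDist y A₁) ^ 2) = distPotential A₁ A₂ lam := by
      funext y; simp [distPotential]; ring
    rw [this]; exact hmin
  obtain ⟨a₁, ha₁A, ha₁D⟩ := hA₁fin.isCompact.exists_infDist_eq_dist hA₁ xstar
  obtain ⟨a₂, ha₂A, ha₂D⟩ := hA₂fin.isCompact.exists_infDist_eq_dist hA₂ xstar
  constructor
  · refine ⟨a₁, Set.eq_singleton_iff_unique_mem.mpr ⟨⟨ha₁A, by rw [ha₁D, dist_eq_norm]⟩, ?_⟩⟩
    intro y hy
    exact key hlam₀ (by linarith) hA₂ hA₂fin hmin₁ hy ⟨ha₁A, by rw [ha₁D, dist_eq_norm]⟩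
  · refine ⟨a₂, Set.eq_singleton_iff_unique_mem.mpr ⟨⟨ha₂A, by rw [ha₂D, dist_eq_norm]⟩, ?_⟩⟩
    intro y hy
    exact key (by linarith) hlam₀.le hA₁ hA₁fin hmin₂ hy ⟨ha₂A, by rw [ha₂D, dist_eq_norm]⟩
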